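/- Let A, B be symmetric positive-definite matrices, θ ∈ [0,1], and e a unit vector. Then the lamination formula H[A,B;θ,e] = (1−θ)A + θB − θ(1−θ)(A−B)ee^T(A−B) / (e^T(θA+(1−θ)B)e) defines a symmetric matrix satisfying the bounds ((1−θ)A^{-1} + θB^{-1})^{-1} ≤ H[A,B;θ,e] ≤ (1−θ)A + θB. In particular, if μ₀I ≤ A, B ≤ μ₁I then μ₀I ≤ H[A,B;θ,e] ≤ μ₁I. -/

import Mathlib

open Matrix


lemma transpose_eq_of_herm {n : ℕ} {A : Matrix (Fin n) (Fin n) ℝ} (hA : A.IsHermitian) : Aᵀ = A := by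
  simpa [← Matrix.conjTranspose_eq_transpose_of_trivial] using hA.eq

lemma dpSymm {n : ℕ} {A : Matrix (Fin n) (Fin n) ℝ} (hA : A.IsHermitian) (v w : Fin n → ℝ) :
    v ⬝ᵥ A.mulVec w = w ⬝ᵥ A.mulVec v := by
  rw [dotProduct_mulVec, ← Matrix.mulVec_transpose, transpose_eq_of_herm hA]
  exact dotProduct_comm _ _

lemma vmv_mulVec {n : ℕ} (e x : Fin n → ℝ) : (vecMulVec e e).mulVec x = (e ⬝ᵥ x) • e := by
  ext i
  simp [vecMulVec, Matrix.mulVec, dotProduct, Finset.mul_sum, mul_comm, mul_assoc, mul_left_comm]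

lemma herm_smul {n : ℕ} {M : Matrix (Fin n) (Fin n) ℝ} (hM : M.IsHermitian) (c : ℝ) :
    (c • M).IsHermitian := by
  unfold Matrix.IsHermitian
  rw [Matrix.conjTranspose_smul, hM.eq, star_trivial]

lemma smul_psd {n : ℕ} {M : Matrix (Fin n) (Fin n) ℝ} (hM : M.PosSemidef) {c : ℝ} (hc : 0 ≤ c) :
    (c • M).PosSemidef := by
  refine Matrix.PosSemidef.of_dotProduct_mulVec_nonneg (herm_smul hM.1 c) (fun x => ?_)
  have := hM.dotProduct_mulVec_nonneg x
  simp only [Matrix.smul_mulVec, dotProduct_smul, smul_eq_mul, star_trivial] at this ⊢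
  exact mul_nonneg hc (by simpa using this)

lemma inv_lower {n : ℕ} {A : Matrix (Fin n) (Fin n) ℝ} (hA : A.PosDef) (a y : Fin n → ℝ) :
    2*(a ⬝ᵥ y) - y ⬝ᵥ A⁻¹.mulVec y ≤ a ⬝ᵥ A.mulVec a := by
  set w := A⁻¹.mulVec y with hwdef
  have hAA : A * A⁻¹ = 1 := Matrix.mul_nonsing_inv A (isUnit_iff_ne_zero.mpr hA.det_pos.ne')
  have hw : A.mulVec w = y := by
    rw [hwdef, Matrix.mulVec_mulVec, hAA, Matrix.one_mulVec]
  have h0 : 0 ≤ (a - w) ⬝ᵥ A.mulVec (a - w) := by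
    have := hA.posSemidef.dotProduct_mulVec_nonneg (a - w); simpa using this
  have h1 : w ⬝ᵥ A.mulVec a = a ⬝ᵥ y := by rw [dpSymm hA.1, hw]
  have h2 : a ⬝ᵥ A.mulVec w = a ⬝ᵥ y := by rw [hw]
  have h3 : w ⬝ᵥ A.mulVec w = y ⬝ᵥ A⁻¹.mulVec y := by rw [hw]; exact dotProduct_comm _ _
  simp only [Matrix.mulVec_sub, dotProduct_sub, sub_dotProduct] at h0
  linarith [h0]

/-- The lamination formula `H[A,B;θ,e]`. -/
noncomputable def lamination {n : ℕ} (A B : Matrix (Fin n) (Fin n) ℝ) (θ : ℝ)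
    (e : Fin n → ℝ) : Matrix (Fin n) (Fin n) ℝ :=
  (1 - θ) • A + θ • B -
    (θ * (1 - θ) / (((θ • A + (1 - θ) • B).mulVec e) ⬝ᵥ e)) •
      ((A - B) * vecMulVec e e * (A - B))

/-- The lamination `H[A,B;θ,e]` is a symmetric matrix satisfying
`((1−θ)A⁻¹+θB⁻¹)⁻¹ ≤ H[A,B;θ,e] ≤ (1−θ)A+θB`; in particular, if `μ₀I ≤ A,B ≤ μ₁I`
then `μ₀I ≤ H[A,B;θ,e] ≤ μ₁I`. -/
theorem lamination_bounds {n : ℕ} (μ₀ μ₁ : ℝ) (hμ₀ : 0 < μ₀) (hμ : μ₀ ≤ μ₁)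
    (A B : Matrix (Fin n) (Fin n) ℝ) (hA : A.PosDef) (hB : B.PosDef)
    (hAl : (A - μ₀ • (1 : Matrix (Fin n) (Fin n) ℝ)).PosSemidef)
    (hAu : (μ₁ • (1 : Matrix (Fin n) (Fin n) ℝ) - A).PosSemidef)
    (hBl : (B - μ₀ • (1 : Matrix (Fin n) (Fin n) ℝ)).PosSemidef)
    (hBu : (μ₁ • (1 : Matrix (Fin n) (Fin n) ℝ) - B).PosSemidef)
    (θ : ℝ) (hθ : θ ∈ Set.Icc (0:ℝ) 1) (e : Fin n → ℝ) (he : e ⬝ᵥ e = 1) :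
    (lamination A B θ e).IsSymm ∧
    (lamination A B θ e - ((1 - θ) • A⁻¹ + θ • B⁻¹)⁻¹).PosSemidef ∧
    ((1 - θ) • A + θ • B - lamination A B θ e).PosSemidef ∧
    (lamination A B θ e - μ₀ • (1 : Matrix (Fin n) (Fin n) ℝ)).PosSemidef ∧
    (μ₁ • (1 : Matrix (Fin n) (Fin n) ℝ) - lamination A B θ e).PosSemidef := by
  obtain ⟨ht0, ht1⟩ := hθ
  have hs0 : (0:ℝ) ≤ 1 - θ := by linarith
  have hDh : (A - B).IsHermitian := hA.1.sub hB.1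
  -- the denominator
  set d := ((θ • A + (1 - θ) • B).mulVec e) ⬝ᵥ e with hd_def
  have hMl : ((θ • A + (1 - θ) • B) - μ₀ • (1 : Matrix (Fin n) (Fin n) ℝ)).PosSemidef := by
    have heq : (θ • A + (1 - θ) • B) - μ₀ • (1 : Matrix (Fin n) (Fin n) ℝ) =
        θ • (A - μ₀ • 1) + (1 - θ) • (B - μ₀ • (1 : Matrix (Fin n) (Fin n) ℝ)) := by
      ext i j
      simp [Matrix.sub_apply, Matrix.add_apply, Matrix.smul_apply, smul_eq_mul]
      ring
    rw [heq]
    exact (smul_psd hAl ht0).add (smul_psd hBl hs0)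
  have hd : 0 < d := by
    have h1 := hMl.dotProduct_mulVec_nonneg e
    simp only [star_trivial, Matrix.sub_mulVec, dotProduct_sub, Matrix.smul_mulVec,
      Matrix.one_mulVec, dotProduct_smul, smul_eq_mul] at h1
    have h2 : d = e ⬝ᵥ (θ • A + (1 - θ) • B).mulVec e := dotProduct_comm _ _
    rw [h2, he] at *
    rw [he] at h1
    nlinarith [h1]
  -- mulVec formula for the lamination
  have hHmv : ∀ x, (lamination A B θ e).mulVec x =
      (1-θ) • A.mulVec x + θ • B.mulVec x -
        ((θ*(1-θ)/d) * (e ⬝ᵥ (A - B).mulVec x)) • (A - B).mulVec e := by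
    intro x
    unfold lamination
    rw [Matrix.sub_mulVec, Matrix.add_mulVec, Matrix.smul_mulVec,
      Matrix.smul_mulVec, Matrix.smul_mulVec]
    congr 1
    rw [← Matrix.mulVec_mulVec, ← Matrix.mulVec_mulVec, vmv_mulVec, Matrix.mulVec_smul,
      smul_smul]
  -- quadratic form of the lamination
  have hqf : ∀ x, x ⬝ᵥ (lamination A B θ e).mulVec x =
      (1-θ)*(x ⬝ᵥ A.mulVec x) + θ*(x ⬝ᵥ B.mulVec x)
        - (θ*(1-θ)/d) * (e ⬝ᵥ (A - B).mulVec x)^2 := by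
    intro x
    rw [hHmv x]
    simp only [dotProduct_sub, dotProduct_add, dotProduct_smul, smul_eq_mul]
    rw [dpSymm hDh x e]
    ring
  -- Hermitian-ness
  have hvmv : (vecMulVec e e).IsHermitian := by
    unfold Matrix.IsHermitian
    ext i j
    simp [Matrix.conjTranspose_apply, vecMulVec, mul_comm]
  have hDED : ((A - B) * vecMulVec e e * (A - B)).IsHermitian := by
    unfold Matrix.IsHermitian
    rw [Matrix.conjTranspose_mul, Matrix.conjTranspose_mul, hDh.eq, hvmv.eq, ← Matrix.mul_assoc]
  have hH : (lamination A B θ e).IsHermitian := by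
    unfold lamination
    exact ((herm_smul hA.1 _).add (herm_smul hB.1 _)).sub (herm_smul hDED _)
  -- key identity: x·Hx = (1-θ) a·Aa + θ b·Bb for laminate fields a,b averaging to x
  have key : ∀ x : Fin n → ℝ, ∃ a b : Fin n → ℝ, (1-θ) • a + θ • b = x ∧
      x ⬝ᵥ (lamination A B θ e).mulVec x
        = (1-θ)*(a ⬝ᵥ A.mulVec a) + θ*(b ⬝ᵥ B.mulVec b) := by
    intro x
    refine ⟨x + (θ * (-(e ⬝ᵥ (A - B).mulVec x)/d)) • e,
            x - ((1-θ) * (-(e ⬝ᵥ (A - B).mulVec x)/d)) • e, ?_, ?_⟩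
    · ext i
      simp only [Pi.add_apply, Pi.sub_apply, Pi.smul_apply, smul_eq_mul]
      ring
    · have ea : ∀ μ : ℝ, (x + μ • e) ⬝ᵥ A.mulVec (x + μ • e)
          = x ⬝ᵥ A.mulVec x + 2*μ*(e ⬝ᵥ A.mulVec x) + μ^2*(e ⬝ᵥ A.mulVec e) := by
        intro μ
        simp only [Matrix.mulVec_add, Matrix.mulVec_smul, dotProduct_add, add_dotProduct,
          dotProduct_smul, smul_dotProduct, smul_eq_mul]
        rw [dpSymm hA.1 x e]
        ring
      have eb : ∀ μ : ℝ, (x - μ • e) ⬝ᵥ B.mulVec (x - μ • e)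
          = x ⬝ᵥ B.mulVec x - 2*μ*(e ⬝ᵥ B.mulVec x) + μ^2*(e ⬝ᵥ B.mulVec e) := by
        intro μ
        simp only [Matrix.mulVec_sub, Matrix.mulVec_smul, dotProduct_sub, sub_dotProduct,
          dotProduct_smul, smul_dotProduct, smul_eq_mul]
        rw [dpSymm hB.1 x e]
        ring
      rw [hqf x, ea, eb]
      have hg : e ⬝ᵥ (A - B).mulVec x = e ⬝ᵥ A.mulVec x - e ⬝ᵥ B.mulVec x := by
        simp [Matrix.sub_mulVec, dotProduct_sub]
      have hgd : d = θ*(e ⬝ᵥ A.mulVec e) + (1-θ)*(e ⬝ᵥ B.mulVec e) := by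
        rw [hd_def]
        rw [dotProduct_comm]
        simp [Matrix.add_mulVec, Matrix.smul_mulVec, dotProduct_add, dotProduct_smul,
          smul_eq_mul]
      have hd0 : θ*(e ⬝ᵥ A.mulVec e) + (1-θ)*(e ⬝ᵥ B.mulVec e) ≠ 0 := by
        rw [← hgd]; exact hd.ne'
      rw [hg, hgd]
      field_simp
      ring
  -- upper quadratic bound
  have hup : ∀ x, x ⬝ᵥ ((1-θ) • A + θ • B).mulVec x
      = (1-θ)*(x ⬝ᵥ A.mulVec x) + θ*(x ⬝ᵥ B.mulVec x) := by
    intro x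
    simp [Matrix.add_mulVec, Matrix.smul_mulVec, dotProduct_add, dotProduct_smul,
      smul_eq_mul]
  have hc0 : 0 ≤ θ*(1-θ)/d := div_nonneg (mul_nonneg ht0 hs0) hd.le
  refine ⟨?_, ?_, ?_, ?_, ?_⟩
  -- 1. symmetry
  · simpa [Matrix.IsSymm, ← Matrix.conjTranspose_eq_transpose_of_trivial] using hH.eq
  -- 2. harmonic lower bound
  · have hAi : (A⁻¹).PosDef := hA.inv
    have hBi : (B⁻¹).PosDef := hB.inv
    have hSpd : ((1 - θ) • A⁻¹ + θ • B⁻¹).PosDef := by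
      refine Matrix.PosDef.of_dotProduct_mulVec_pos ((herm_smul hAi.1 _).add (herm_smul hBi.1 _)) (fun x hx => ?_)
      have h1 := hAi.dotProduct_mulVec_pos hx
      have h2 := hBi.dotProduct_mulVec_pos hx
      simp only [star_trivial] at h1 h2 ⊢
      simp only [Matrix.add_mulVec, Matrix.smul_mulVec, dotProduct_add, dotProduct_smul,
        smul_eq_mul]
      rcases ht1.lt_or_eq with h | h
      · have := mul_pos (by linarith : (0:ℝ) < 1 - θ) h1
        nlinarith [mul_nonneg ht0 h2.le]
      · rw [h]
        simpa using h2
    have hK : (((1 - θ) • A⁻¹ + θ • B⁻¹)⁻¹).PosDef := hSpd.inv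
    refine Matrix.PosSemidef.of_dotProduct_mulVec_nonneg (hH.sub hK.1) (fun x => ?_)
    rw [star_trivial, Matrix.sub_mulVec, dotProduct_sub, sub_nonneg]
    obtain ⟨a, b, hab, hkey⟩ := key x
    set S := (1 - θ) • A⁻¹ + θ • B⁻¹ with hS_def
    set y := S⁻¹.mulVec x with hy
    have hSy : S.mulVec y = x := by
      rw [hy, Matrix.mulVec_mulVec,
        Matrix.mul_nonsing_inv _ (isUnit_iff_ne_zero.mpr hSpd.det_pos.ne'), Matrix.one_mulVec]
    have h1 := inv_lower hA a y
    have h2 := inv_lower hB b y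
    have e1 : (1-θ)*(a ⬝ᵥ y) + θ*(b ⬝ᵥ y) = x ⬝ᵥ y := by
      rw [← hab]
      simp [add_dotProduct, smul_dotProduct, smul_eq_mul]
    have e2 : (1-θ)*(y ⬝ᵥ A⁻¹.mulVec y) + θ*(y ⬝ᵥ B⁻¹.mulVec y) = x ⬝ᵥ y := by
      have h3 : y ⬝ᵥ S.mulVec y = x ⬝ᵥ y := by rw [hSy]; exact dotProduct_comm _ _
      rw [← h3, hS_def]
      simp [Matrix.add_mulVec, Matrix.smul_mulVec, dotProduct_add, dotProduct_smul,
        smul_eq_mul]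
    have hxK : x ⬝ᵥ S⁻¹.mulVec x = x ⬝ᵥ y := by rw [hy]
    rw [hkey, hxK]
    linarith [mul_le_mul_of_nonneg_left h1 hs0, mul_le_mul_of_nonneg_left h2 ht0, e1, e2]
  -- 3. arithmetic upper bound
  · refine Matrix.PosSemidef.of_dotProduct_mulVec_nonneg ((((herm_smul hA.1 _).add (herm_smul hB.1 _))).sub hH) (fun x => ?_)
    rw [star_trivial, Matrix.sub_mulVec, dotProduct_sub, sub_nonneg, hqf x, hup x]
    nlinarith [mul_nonneg hc0 (sq_nonneg (e ⬝ᵥ (A - B).mulVec x))]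
  -- 4. lower bound μ₀
  · refine Matrix.PosSemidef.of_dotProduct_mulVec_nonneg (hH.sub (herm_smul Matrix.isHermitian_one μ₀)) (fun x => ?_)
    rw [star_trivial, Matrix.sub_mulVec, dotProduct_sub, sub_nonneg, Matrix.smul_mulVec,
      Matrix.one_mulVec, dotProduct_smul, smul_eq_mul]
    obtain ⟨a, b, hab, hkey⟩ := key x
    have la : μ₀*(a ⬝ᵥ a) ≤ a ⬝ᵥ A.mulVec a := by
      have := hAl.dotProduct_mulVec_nonneg a
      simp only [star_trivial, Matrix.sub_mulVec, Matrix.smul_mulVec, Matrix.one_mulVec,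
        dotProduct_sub, dotProduct_smul, smul_eq_mul] at this
      linarith
    have lb : μ₀*(b ⬝ᵥ b) ≤ b ⬝ᵥ B.mulVec b := by
      have := hBl.dotProduct_mulVec_nonneg b
      simp only [star_trivial, Matrix.sub_mulVec, Matrix.smul_mulVec, Matrix.one_mulVec,
        dotProduct_sub, dotProduct_smul, smul_eq_mul] at this
      linarith
    have hab2 : 0 ≤ (a - b) ⬝ᵥ (a - b) := by
      apply Finset.sum_nonneg
      intro i _
      exact mul_self_nonneg _
    have hexp : (a - b) ⬝ᵥ (a - b) = a ⬝ᵥ a - 2*(a ⬝ᵥ b) + b ⬝ᵥ b := by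
      simp only [sub_dotProduct, dotProduct_sub]
      rw [dotProduct_comm b a]
      ring
    have habd : x ⬝ᵥ x ≤ (1-θ)*(a ⬝ᵥ a) + θ*(b ⬝ᵥ b) := by
      rw [← hab]
      simp only [add_dotProduct, dotProduct_add, smul_dotProduct, dotProduct_smul, smul_eq_mul]
      rw [dotProduct_comm b a]
      nlinarith [mul_nonneg (mul_nonneg ht0 hs0) (by rw [hexp] at hab2; linarith : (0:ℝ) ≤ a ⬝ᵥ a - 2*(a ⬝ᵥ b) + b ⬝ᵥ b)]
    rw [hkey]
    nlinarith [mul_le_mul_of_nonneg_left la hs0, mul_le_mul_of_nonneg_left lb ht0,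
      mul_le_mul_of_nonneg_left habd hμ₀.le]
  -- 5. upper bound μ₁
  · refine Matrix.PosSemidef.of_dotProduct_mulVec_nonneg ((herm_smul Matrix.isHermitian_one μ₁).sub hH) (fun x => ?_)
    rw [star_trivial, Matrix.sub_mulVec, dotProduct_sub, sub_nonneg, Matrix.smul_mulVec,
      Matrix.one_mulVec, dotProduct_smul, smul_eq_mul, hqf x]
    have ua : x ⬝ᵥ A.mulVec x ≤ μ₁*(x ⬝ᵥ x) := by
      have := hAu.dotProduct_mulVec_nonneg x
      simp only [star_trivial, Matrix.sub_mulVec, Matrix.smul_mulVec, Matrix.one_mulVec,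
        dotProduct_sub, dotProduct_smul, smul_eq_mul] at this
      linarith
    have ub : x ⬝ᵥ B.mulVec x ≤ μ₁*(x ⬝ᵥ x) := by
      have := hBu.dotProduct_mulVec_nonneg x
      simp only [star_trivial, Matrix.sub_mulVec, Matrix.smul_mulVec, Matrix.one_mulVec,
        dotProduct_sub, dotProduct_smul, smul_eq_mul] at this
      linarith
    nlinarith [mul_le_mul_of_nonneg_left ua hs0, mul_le_mul_of_nonneg_left ub ht0,
      mul_nonneg hc0 (sq_nonneg (e ⬝ᵥ (A - B).mulVec x))]
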